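/- Let ω be a complex number with ω ≠ 0, ω ≠ 1 and ω ≠ −1, and set y_j = ω^j for every integer j. Then for every integer i the four differences y_{i−1} − y_i, y_i − y_{i+1}, y_{i−2} − y_i, y_i − y_{i+2} are nonzero and −1/(y_{i−1} − y_i) + 1/(y_i − y_{i+1}) + 1/(y_{i−2} − y_i) − 1/(y_i − y_{i+2}) = 0. -/

import Mathlib

/-- For ω ∈ ℂ with ω ≠ 0, 1, −1 and y_j = ω^j, the k=2 infinite-chain
scattering equation holds at the geometric configuration. -/
theorem stmt_1 (ω : ℂ) (h0 : ω ≠ 0) (h1 : ω ≠ 1) (hm1 : ω ≠ -1) (i : ℤ) :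
    let y : ℤ → ℂ := fun j => ω ^ j
    (y (i - 1) - y i ≠ 0 ∧ y i - y (i + 1) ≠ 0 ∧
      y (i - 2) - y i ≠ 0 ∧ y i - y (i + 2) ≠ 0) ∧
    -(1 / (y (i - 1) - y i)) + 1 / (y i - y (i + 1))
      + 1 / (y (i - 2) - y i) - 1 / (y i - y (i + 2)) = 0 := by
  intro y
  have ha : (ω : ℂ) ^ i ≠ 0 := zpow_ne_zero _ h0
  have hinv : ω⁻¹ ≠ 0 := inv_ne_zero h0
  have hω1' : 1 - ω ≠ 0 := sub_ne_zero.2 (Ne.symm h1)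
  have hωm1 : ω + 1 ≠ 0 := by intro h; apply hm1; linear_combination h
  have hc1 : ω⁻¹ - 1 ≠ 0 := by
    intro h
    apply h1
    have : ω⁻¹ = 1 := by linear_combination h
    field_simp at this
    linear_combination -this
  have hc3 : ω⁻¹ * ω⁻¹ - 1 ≠ 0 := by
    intro h
    have h' : (1 : ℂ) = ω * ω := by
      field_simp at h
      linear_combination h
    have : (ω - 1) * (ω + 1) = 0 := by linear_combination -h'
    rcases mul_eq_zero.1 this with h'' | h''
    · exact h1 (by linear_combination h'')
    · exact hωm1 h''
  have hc4 : 1 - ω * ω ≠ 0 := by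
    intro h
    have : (ω - 1) * (ω + 1) = 0 := by linear_combination -h
    rcases mul_eq_zero.1 this with h'' | h''
    · exact h1 (by linear_combination h'')
    · exact hωm1 h''
  have E1 : y (i - 1) = ω ^ i * ω⁻¹ := by
    show ω ^ (i - 1) = _
    rw [zpow_sub₀ h0, zpow_one, div_eq_mul_inv]
  have E2 : y (i + 1) = ω ^ i * ω := by
    show ω ^ (i + 1) = _
    rw [zpow_add₀ h0, zpow_one]
  have h2 : ω ^ (2 : ℤ) = ω * ω := by
    rw [show (2 : ℤ) = 1 + 1 by norm_num, zpow_add₀ h0, zpow_one]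
  have E3 : y (i - 2) = ω ^ i * (ω⁻¹ * ω⁻¹) := by
    show ω ^ (i - 2) = _
    rw [zpow_sub₀ h0, h2, div_eq_mul_inv, mul_inv]
  have E4 : y (i + 2) = ω ^ i * (ω * ω) := by
    show ω ^ (i + 2) = _
    rw [zpow_add₀ h0, h2]
  have ey : y i = ω ^ i := rfl
  rw [E1, E2, E3, E4, ey]
  have f1 : ω ^ i * ω⁻¹ - ω ^ i = ω ^ i * (ω⁻¹ - 1) := by ring
  have f2 : ω ^ i - ω ^ i * ω = ω ^ i * (1 - ω) := by ring
  have f3 : ω ^ i * (ω⁻¹ * ω⁻¹) - ω ^ i = ω ^ i * (ω⁻¹ * ω⁻¹ - 1) := by ring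
  have f4 : ω ^ i - ω ^ i * (ω * ω) = ω ^ i * (1 - ω * ω) := by ring
  rw [f1, f2, f3, f4]
  refine ⟨⟨mul_ne_zero ha hc1, mul_ne_zero ha hω1', mul_ne_zero ha hc3,
    mul_ne_zero ha hc4⟩, ?_⟩
  have hc4' : (1 : ℂ) - ω ^ 2 ≠ 0 := by rw [sq]; exact hc4
  field_simp
  ring
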